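/- arXiv:2209.14110 — 2 statements merged into one kernel-verified Lean document; each statement's English description precedes it below -/
import Mathlib

section
/- Consider an n-player game with convex compact strategy sets X_k and utilities u_k. Suppose the game is (λ, μ)-smooth with respect to a positive weight vector α ∈ R^n (i.e., there exists a strategy profile x* such that Σ_k α_k u_k(x*_k, x_{−k}) ≥ λ·OPT_α − μ·SW_α(x) for all profiles x, where SW_α(x) := Σ_k α_k u_k(x) and OPT_α := max_x SW_α(x)). If over m iterations with strategy profiles x^(1), ..., x^(m) each player k has weighted regret Σ_{i=1}^m α_k( u_k(x*_k, x^(i)_{−k}) − u_k(x^(i)) ) ≤ α_k R_k, then (1/m) Σ_{i=1}^m SW_α(x^(i)) ≥ (λ/(1+μ))·OPT_α − (1/(1+μ))·(1/m) Σ_k α_k R_k. -/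
/-- In a `(λ, μ)`-smooth game with respect to weights `α`, if each player's weighted
regret against the smoothness deviation is bounded, then the average weighted social
welfare is at least the robust-price-of-anarchy fraction of `OPT_α` minus the average
weighted regret divided by `1 + μ`. -/
theorem smooth_game_welfare {n m : ℕ} (hm : 1 ≤ m)
    (S : Fin n → Type*) (u : Fin n → (∀ k, S k) → ℝ)
    (α : Fin n → ℝ) (hα : ∀ k, 0 < α k)
    (lam μ : ℝ) (hlam : 0 < lam) (hμ : 0 < μ)
    (OPTα : ℝ)
    (hOPT : ∀ x : ∀ k, S k, (∑ k, α k * u k x) ≤ OPTα)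
    (hOPTmem : ∃ x : ∀ k, S k, (∑ k, α k * u k x) = OPTα)
    (xstar : ∀ k, S k)
    (hsmooth : ∀ x : ∀ k, S k,
      lam * OPTα - μ * (∑ k, α k * u k x) ≤
        ∑ k, α k * u k (Function.update x k (xstar k)))
    (xp : Fin m → ∀ k, S k) (R : Fin n → ℝ)
    (hreg : ∀ k, (∑ i, α k * (u k (Function.update (xp i) k (xstar k)) - u k (xp i)))
      ≤ α k * R k) :
    (lam / (1 + μ)) * OPTα - (1 / (1 + μ)) * ((1 / m) * ∑ k, α k * R k) ≤
      (1 / m) * ∑ i, ∑ k, α k * u k (xp i) := by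
  set T : ℝ := ∑ i, ∑ k, α k * u k (xp i) with hT
  set Rs : ℝ := ∑ k, α k * R k with hRs
  have hm' : (0:ℝ) < m := by exact_mod_cast hm
  have h1p : (0:ℝ) < 1 + μ := by linarith
  -- sum smoothness over iterations
  have hsum : ∑ i : Fin m, (lam * OPTα - μ * ∑ k, α k * u k (xp i)) ≤
      ∑ i : Fin m, ∑ k, α k * u k (Function.update (xp i) k (xstar k)) :=
    Finset.sum_le_sum fun i _ => hsmooth (xp i)
  have hregsum : ∑ i : Fin m, ∑ k, α k * u k (Function.update (xp i) k (xstar k)) ≤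
      Rs + T := by
    have h1 : ∑ i : Fin m, ∑ k, α k * u k (Function.update (xp i) k (xstar k)) =
        (∑ k, ∑ i, α k * (u k (Function.update (xp i) k (xstar k)) - u k (xp i))) + T := by
      simp only [mul_sub, Finset.sum_sub_distrib, hT]
      rw [Finset.sum_comm (f := fun k i => α k * u k (Function.update (xp i) k (xstar k))),
        Finset.sum_comm (f := fun k i => α k * u k (xp i))]
      ring
    rw [h1, hRs]
    exact add_le_add_left (Finset.sum_le_sum fun k _ => hreg k) T
  have hleft : (m:ℝ) * (lam * OPTα) - μ * T ≤ Rs + T := by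
    have heq : ∑ i : Fin m, (lam * OPTα - μ * ∑ k, α k * u k (xp i)) =
        (m:ℝ) * (lam * OPTα) - μ * T := by
      rw [Finset.sum_sub_distrib, Finset.sum_const, ← Finset.mul_sum]
      simp [hT]
    linarith [heq ▸ (hsum.trans hregsum)]
  have key : (m:ℝ) * (lam * OPTα) ≤ Rs + (1 + μ) * T := by linarith
  rw [div_mul_eq_mul_div,
    show (1:ℝ)/(1+μ) * (1/(m:ℝ)*Rs) = (1/(m:ℝ)*Rs)/(1+μ) by ring,
    div_sub_div_same, div_le_iff₀ h1p, sub_le_iff_le_add]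
  have h2 : lam * OPTα ≤ (1/m) * Rs + (1/m) * ((1+μ)*T) := by
    have := mul_le_mul_of_nonneg_left key (le_of_lt (inv_pos.mpr hm'))
    rw [← mul_assoc, inv_mul_cancel₀ (ne_of_gt hm'), one_mul] at this
    calc lam * OPTα ≤ (m:ℝ)⁻¹ * (Rs + (1+μ)*T) := this
      _ = (1/m) * Rs + (1/m) * ((1+μ)*T) := by rw [one_div]; ring
  calc lam * OPTα ≤ (1/m) * Rs + (1/m) * ((1+μ)*T) := h2
    _ = 1 / ↑m * T * (1 + μ) + 1 / ↑m * Rs := by ring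
end

section
/- Let V(x, y) = (x^T R y)/(x^T S y) be Von Neumann's ratio game, where R, S ∈ R^{d_x × d_y}, x ∈ Δ^{d_x}, y ∈ Δ^{d_y}, and x^T S y ≥ ζ > 0 for all feasible (x, y). Then for any x, x* ∈ Δ^{d_x} and y ∈ Δ^{d_y}: V(x, y) − V(x*, y) = α(x, x*, y) · ⟨x − x*, ∇_x V(x, y)⟩, where α(x, x*, y) := (x^T S y)/((x*)^T S y) and ∇_x V(x, y) = [R y (x^T S y) − S y (x^T R y)] / (x^T S y)². -/
open Matrix

/-- Gradient-difference identity for Von Neumann's ratio game: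
`V(x,y) − V(x*,y) = α(x,x*,y)·⟨x − x*, ∇_x V(x,y)⟩` with
`α(x,x*,y) = (xᵀS y)/((x*)ᵀS y)`. -/
theorem ratio_game_gradient_identity {dx dy : ℕ}
    (R S : Matrix (Fin dx) (Fin dy) ℝ) (ζ : ℝ) (hζ : 0 < ζ)
    (x xstar : Fin dx → ℝ) (y : Fin dy → ℝ)
    (hx : x ∈ stdSimplex ℝ (Fin dx)) (hxstar : xstar ∈ stdSimplex ℝ (Fin dx))
    (hy : y ∈ stdSimplex ℝ (Fin dy))
    (hxS : ζ ≤ x ⬝ᵥ S.mulVec y) (hxstarS : ζ ≤ xstar ⬝ᵥ S.mulVec y)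
    (g : Fin dx → ℝ)
    (hg : g = ((x ⬝ᵥ S.mulVec y) ^ 2)⁻¹ •
        ((x ⬝ᵥ S.mulVec y) • R.mulVec y - (x ⬝ᵥ R.mulVec y) • S.mulVec y)) :
    (x ⬝ᵥ R.mulVec y) / (x ⬝ᵥ S.mulVec y) -
        (xstar ⬝ᵥ R.mulVec y) / (xstar ⬝ᵥ S.mulVec y) =
      ((x ⬝ᵥ S.mulVec y) / (xstar ⬝ᵥ S.mulVec y)) * ((x - xstar) ⬝ᵥ g) := by
  have hb : (0:ℝ) < x ⬝ᵥ S.mulVec y := lt_of_lt_of_le hζ hxS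
  have hd : (0:ℝ) < xstar ⬝ᵥ S.mulVec y := lt_of_lt_of_le hζ hxstarS
  subst hg
  set a := x ⬝ᵥ R.mulVec y
  set b := x ⬝ᵥ S.mulVec y
  set c := xstar ⬝ᵥ R.mulVec y
  set d := xstar ⬝ᵥ S.mulVec y
  have h : (x - xstar) ⬝ᵥ ((b ^ 2)⁻¹ • (b • R.mulVec y - a • S.mulVec y))
      = (b ^ 2)⁻¹ * (b * (a - c) - a * (b - d)) := by
    simp [dotProduct_smul, dotProduct_sub, sub_dotProduct, smul_eq_mul]
    exact Or.inl rfl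
  rw [h]
  field_simp
  ring
end
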